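/- Let m ≥ 4 be even, n ≥ m, and let (a₁ a₂) be a transposition in Sₙ. With three groups of m/2 − 1 new outsiders w₁,…,w_{m/2−1}, y₁,…,y_{m/2−1}, z₁,…,z_{m/2−1}, the inverse (a₁ a₂) equals the product of the three m-cycles (a₁ z_{m/2−1} ⋯ z₁ y_{m/2−1} ⋯ y₁ a₂) · (a₁ w_{m/2−1} ⋯ w₁ a₂ z₁ ⋯ z_{m/2−1}) · (w₁ ⋯ w_{m/2−1} a₁ y₁ ⋯ y_{m/2−1} a₂), and these three m-cycles permute pairwise distinct sets of m elements. -/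

import Mathlib

open List Equiv

private lemma swap_comm_formPerm (a b : ℕ) (R : List ℕ) (ha : a ∉ R) (hb : b ∉ R) :
    Commute (Equiv.swap a b) (List.formPerm R) := by
  apply Equiv.Perm.Disjoint.commute
  intro x
  by_cases hx : x ∈ R
  · left
    exact Equiv.swap_apply_of_ne_of_ne (fun h => ha (h ▸ hx)) (fun h => hb (h ▸ hx))
  · right
    exact List.formPerm_apply_of_notMem hx

private lemma conj_formPerm (a z : ℕ) (R : List ℕ) (haz : a ≠ z) (ha : a ∉ R) (hz : z ∉ R) :
    Equiv.swap a z * List.formPerm (z :: R) * Equiv.swap a z = List.formPerm (a :: R) := by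
  cases R with
  | nil => simp
  | cons r R =>
    have har : r ≠ a := fun h => ha (h ▸ List.mem_cons_self)
    have hzr : r ≠ z := fun h => hz (h ▸ List.mem_cons_self)
    have hcomm : Commute (Equiv.swap a z) (List.formPerm (r :: R)) :=
      swap_comm_formPerm a z (r :: R) ha hz
    rw [List.formPerm_cons_cons, List.formPerm_cons_cons, mul_assoc, mul_assoc,
      ← hcomm.eq, ← mul_assoc, ← mul_assoc]
    congr 1
    have h2 : Equiv.swap z a * Equiv.swap r z * Equiv.swap z a = Equiv.swap a r :=
      Equiv.swap_mul_swap_mul_swap hzr har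
    rwa [Equiv.swap_comm z a, Equiv.swap_comm r z] at h2

/-- move last element to front -/
private lemma formPerm_concat (x : ℕ) (l : List ℕ) (h : (x :: l).Nodup) :
    List.formPerm (l ++ [x]) = List.formPerm (x :: l) := by
  rw [← List.formPerm_rotate_one (x :: l) h, List.rotate_cons_succ, List.rotate_zero]

private lemma cancel_lemma (a : ℕ) (Z T S : List ℕ)
    (hT : (a :: (T ++ Z)).Nodup) (hS : (a :: (S ++ Z)).Nodup) :
    List.formPerm (a :: (Z.reverse ++ T)) * List.formPerm (a :: (S ++ Z)) =
      List.formPerm (a :: T) * List.formPerm (a :: S) := by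
  induction Z using List.reverseRecOn with
  | nil => simp
  | append_singleton Z' zz ih =>
    simp only [List.nodup_cons, List.nodup_append', List.mem_append, List.disjoint_left,
      List.mem_singleton, List.nodup_singleton, List.not_mem_nil, not_or,
      List.mem_reverse] at hT hS
    obtain ⟨⟨haT, haZ', haz⟩, hnT, ⟨hnZ', -, hZz⟩, hTZ⟩ := hT
    obtain ⟨⟨haS, -, -⟩, hnS, -, hSZ⟩ := hS
    have haR : a ∉ Z'.reverse ++ T := by
      simp only [List.mem_append, List.mem_reverse]; tauto
    have hzR : zz ∉ Z'.reverse ++ T := by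
      simp only [List.mem_append, List.mem_reverse, not_or]
      exact ⟨fun hc => hZz hc rfl, fun hc => (hTZ hc).2 rfl⟩
    have hrw : (Z' ++ [zz]).reverse ++ T = zz :: (Z'.reverse ++ T) := by simp
    have key1 : List.formPerm (a :: ((Z' ++ [zz]).reverse ++ T)) =
        List.formPerm (a :: (Z'.reverse ++ T)) * Equiv.swap a zz := by
      rw [hrw, List.formPerm_cons_cons]
      have hc := conj_formPerm a zz (Z'.reverse ++ T) haz haR hzR
      have := congrArg (· * Equiv.swap a zz) hc
      simpa [mul_assoc] using this
    have hnod2 : (zz :: a :: (S ++ Z')).Nodup := by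
      simp only [List.nodup_cons, List.nodup_append', List.mem_append, List.disjoint_left,
        List.mem_cons, not_or]
      refine ⟨⟨fun h => haz h.symm, fun h => (hSZ h).2 rfl,
        fun h => hZz h rfl⟩, ⟨haS, ?_⟩, hnS, hnZ', fun x hx => (hSZ hx).1⟩
      tauto
    have key2 : List.formPerm (a :: (S ++ (Z' ++ [zz]))) =
        Equiv.swap zz a * List.formPerm (a :: (S ++ Z')) := by
      have hl : a :: (S ++ (Z' ++ [zz])) = (a :: (S ++ Z')) ++ [zz] := by simp
      rw [hl, formPerm_concat zz _ hnod2, List.formPerm_cons_cons]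
    have hT' : (a :: (T ++ Z')).Nodup := by
      simp only [List.nodup_cons, List.nodup_append', List.mem_append, List.disjoint_left,
        not_or]
      exact ⟨by tauto, hnT, hnZ', fun x hx => (hTZ hx).1⟩
    have hS' : (a :: (S ++ Z')).Nodup := by
      simp only [List.nodup_cons, List.nodup_append', List.mem_append, List.disjoint_left,
        not_or]
      exact ⟨by tauto, hnS, hnZ', fun x hx => (hSZ hx).1⟩
    rw [key1, key2, mul_assoc, ← mul_assoc (Equiv.swap a zz), Equiv.swap_comm zz a,
      Equiv.swap_mul_self, one_mul, ← ih hT' hS']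

private lemma merge_lemma (a b : ℕ) (U V : List ℕ) (h : (a :: b :: (U ++ V)).Nodup) :
    List.formPerm (a :: (U ++ [b])) * List.formPerm (a :: (V ++ [b])) =
      Equiv.swap a b * List.formPerm (a :: (V ++ ([b] ++ U))) := by
  induction U using List.reverseRecOn with
  | nil => simp [List.formPerm_pair]
  | append_singleton U' u ih =>
    simp only [List.nodup_cons, List.nodup_append', List.mem_append, List.disjoint_left,
      List.mem_singleton, List.nodup_singleton, List.not_mem_nil, not_or,
      List.mem_cons] at h
    obtain ⟨⟨hab, ⟨haU', hau, -⟩, haV⟩, ⟨⟨hbU', hbu, -⟩, hbV⟩,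
      ⟨hnUV, -, hU'u⟩, hnV, hUV⟩ := h
    have hua : u ≠ a := fun hc => hau hc.symm
    have hub : u ≠ b := fun hc => hbu hc.symm
    have huU' : u ∉ U' := fun hc => (hU'u hc).1 rfl
    have huV : u ∉ V := hUV (Or.inr (Or.inl rfl))
    have hdisj : ∀ x ∈ U', x ∉ V := fun x hx => hUV (Or.inl hx)
    -- first factor
    have hnod1 : (b :: (a :: (U' ++ [u]))).Nodup := by
      simp only [List.nodup_cons, List.nodup_append', List.mem_append, List.disjoint_left,
        List.mem_singleton, List.nodup_singleton, List.not_mem_nil, not_or, List.mem_cons]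
      exact ⟨⟨fun hc => hab hc.symm, hbU', fun hc => hub hc.symm, not_false⟩,
        ⟨haU', hau, not_false⟩, hnUV, ⟨not_false, List.nodup_nil⟩,
        fun x hx => ⟨(hU'u hx).1, not_false⟩⟩
    have hnod1' : (u :: (b :: (a :: U'))).Nodup := by
      simp only [List.nodup_cons, List.mem_cons, not_or]
      exact ⟨⟨hub, hua, huU'⟩, ⟨fun hc => hab hc.symm, hbU'⟩, haU', hnUV⟩
    have key1 : List.formPerm (a :: ((U' ++ [u]) ++ [b])) =
        Equiv.swap u b * List.formPerm (a :: (U' ++ [b])) := by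
      have e1 : a :: ((U' ++ [u]) ++ [b]) = (b :: (a :: (U' ++ [u]))).rotate 1 := by
        simp [List.rotate_cons_succ]
      rw [e1, List.formPerm_rotate_one _ hnod1]
      have e2 : b :: (a :: (U' ++ [u])) = ((u :: (b :: (a :: U')))).rotate 1 := by
        simp [List.rotate_cons_succ]
      rw [e2, List.formPerm_rotate_one _ hnod1', List.formPerm_cons_cons]
      congr 1
      have e3 : a :: (U' ++ [b]) = (b :: (a :: U')).rotate 1 := by
        simp [List.rotate_cons_succ]
      rw [e3, List.formPerm_rotate_one _ (hnod1'.of_cons)]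
    -- right-hand side
    have hnod3 : (u :: (a :: (V ++ ([b] ++ U')))).Nodup := by
      simp only [List.nodup_cons, List.nodup_append', List.mem_append, List.disjoint_left,
        List.mem_singleton, List.nodup_singleton, List.not_mem_nil, not_or, List.mem_cons]
      refine ⟨⟨hua, huV, ⟨hub, not_false⟩, huU'⟩, ⟨haV, ⟨hab, not_false⟩, haU'⟩, hnV,
        ⟨⟨not_false, List.nodup_nil⟩, hnUV, ?_⟩, ?_⟩
      · intro x hx
        rcases hx with rfl | hx
        · exact hbU'
        · exact hx.elim
      · intro x hx
        exact ⟨⟨fun hc => hbV (hc ▸ hx), not_false⟩, fun hc => hdisj x hc hx⟩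
    have key2 : List.formPerm (a :: (V ++ ([b] ++ (U' ++ [u])))) =
        Equiv.swap u a * List.formPerm (a :: (V ++ ([b] ++ U'))) := by
      have e1 : a :: (V ++ ([b] ++ (U' ++ [u]))) = (u :: (a :: (V ++ ([b] ++ U')))).rotate 1 := by
        simp [List.rotate_cons_succ]
      rw [e1, List.formPerm_rotate_one _ hnod3, List.formPerm_cons_cons]
    have hih : (a :: b :: (U' ++ V)).Nodup := by
      simp only [List.nodup_cons, List.nodup_append', List.mem_append, List.mem_cons,
        List.disjoint_left, not_or]
      exact ⟨⟨hab, haU', haV⟩, ⟨hbU', hbV⟩, hnUV, hnV, hdisj⟩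
    have hswap : Equiv.swap u b * Equiv.swap a b = Equiv.swap a b * Equiv.swap u a := by
      have h2 : Equiv.swap b a * Equiv.swap u b * Equiv.swap b a = Equiv.swap a u :=
        Equiv.swap_mul_swap_mul_swap hub hua
      have h3 := congrArg (fun p => Equiv.swap b a * p) h2
      simp only [← mul_assoc, Equiv.swap_mul_self, one_mul] at h3
      rw [Equiv.swap_comm b a] at h3
      rw [h3, Equiv.swap_comm a u]
    rw [key1, key2, mul_assoc, ih hih, ← mul_assoc, hswap, mul_assoc]

private lemma three_cycles (a₁ a₂ : ℕ) (W Y Z : List ℕ)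
    (h : (a₁ :: a₂ :: (W ++ Y ++ Z)).Nodup) :
    Equiv.swap a₁ a₂ =
      List.formPerm (a₁ :: (Z.reverse ++ Y.reverse ++ [a₂])) *
      List.formPerm (a₁ :: (W.reverse ++ [a₂] ++ Z)) *
      List.formPerm (W ++ [a₁] ++ Y ++ [a₂]) := by
  simp only [List.nodup_cons, List.nodup_append', List.mem_append, List.mem_cons,
    List.disjoint_left, not_or] at h
  obtain ⟨⟨ha12, ⟨haW, haY⟩, haZ⟩, ⟨⟨hbW, hbY⟩, hbZ⟩, ⟨hnW, hnY, hWY⟩, hnZ, hWYZ⟩ := h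
  have hYZ : ∀ x ∈ Y, x ∉ Z := fun x hx => hWYZ (Or.inr hx)
  have hWZ : ∀ x ∈ W, x ∉ Z := fun x hx => hWYZ (Or.inl hx)
  have hT : (a₁ :: ((Y.reverse ++ [a₂]) ++ Z)).Nodup := by
    simp only [List.nodup_cons, List.nodup_append', List.mem_append, List.mem_reverse,
      List.mem_singleton, List.disjoint_left, List.nodup_singleton, List.nodup_reverse,
      List.not_mem_nil, not_or, List.mem_cons]
    refine ⟨⟨⟨haY, ha12, not_false⟩, haZ⟩,
      ⟨hnY, ⟨not_false, List.nodup_nil⟩, fun x hx => ⟨fun hc => hbY (hc ▸ hx), not_false⟩⟩,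
      hnZ, ?_⟩
    intro x hx
    rcases hx with hx | hx | hx
    · exact hYZ x hx
    · exact hx ▸ hbZ
    · exact hx.elim
  have hS : (a₁ :: ((W.reverse ++ [a₂]) ++ Z)).Nodup := by
    simp only [List.nodup_cons, List.nodup_append', List.mem_append, List.mem_reverse,
      List.mem_singleton, List.disjoint_left, List.nodup_singleton, List.nodup_reverse,
      List.not_mem_nil, not_or, List.mem_cons]
    refine ⟨⟨⟨haW, ha12, not_false⟩, haZ⟩,
      ⟨hnW, ⟨not_false, List.nodup_nil⟩, fun x hx => ⟨fun hc => hbW (hc ▸ hx), not_false⟩⟩,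
      hnZ, ?_⟩
    intro x hx
    rcases hx with hx | hx | hx
    · exact hWZ x hx
    · exact hx ▸ hbZ
    · exact hx.elim
  have e1 : a₁ :: (Z.reverse ++ Y.reverse ++ [a₂]) =
      a₁ :: (Z.reverse ++ (Y.reverse ++ [a₂])) := by simp
  have e2 : a₁ :: (W.reverse ++ [a₂] ++ Z) = a₁ :: ((W.reverse ++ [a₂]) ++ Z) := by simp
  rw [e1, e2]
  rw [show List.formPerm (a₁ :: (Z.reverse ++ (Y.reverse ++ [a₂]))) *
      List.formPerm (a₁ :: ((W.reverse ++ [a₂]) ++ Z)) =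
      List.formPerm (a₁ :: (Y.reverse ++ [a₂])) * List.formPerm (a₁ :: (W.reverse ++ [a₂]))
    from cancel_lemma a₁ Z (Y.reverse ++ [a₂]) (W.reverse ++ [a₂]) hT hS]
  have hmerge : (a₁ :: a₂ :: (Y.reverse ++ W.reverse)).Nodup := by
    simp only [List.nodup_cons, List.nodup_append', List.mem_append, List.mem_reverse,
      List.mem_cons, List.nodup_reverse, List.disjoint_left, not_or]
    exact ⟨⟨ha12, haY, haW⟩, ⟨hbY, hbW⟩, hnY, hnW, fun x hx hc => hWY hc hx⟩
  rw [show List.formPerm (a₁ :: (Y.reverse ++ [a₂])) * List.formPerm (a₁ :: (W.reverse ++ [a₂])) =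
      Equiv.swap a₁ a₂ * List.formPerm (a₁ :: (W.reverse ++ ([a₂] ++ Y.reverse)))
    from merge_lemma a₁ a₂ Y.reverse W.reverse hmerge]
  have hinv : List.formPerm (a₁ :: (W.reverse ++ ([a₂] ++ Y.reverse))) =
      (List.formPerm (W ++ [a₁] ++ Y ++ [a₂]))⁻¹ := by
    rw [← List.formPerm_reverse]
    have hrot : a₁ :: (W.reverse ++ ([a₂] ++ Y.reverse)) =
        ([a₁] ++ W.reverse) ++ ((a₂ :: Y.reverse)) := by simp
    have hrev : (W ++ [a₁] ++ Y ++ [a₂]).reverse =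
        (a₂ :: Y.reverse) ++ ([a₁] ++ W.reverse) := by simp
    rw [hrot, hrev]
    apply List.formPerm_eq_of_isRotated _ List.isRotated_append
    simp only [List.nodup_append', List.mem_append, List.mem_reverse, List.mem_cons,
      List.mem_singleton, List.disjoint_left, List.nodup_singleton, List.nodup_reverse,
      List.not_mem_nil, not_or, List.nodup_cons]
    refine ⟨⟨⟨not_false, List.nodup_nil⟩, hnW, ?_⟩, ⟨hbY, hnY⟩, ?_⟩
    · intro x hx
      rcases hx with rfl | hx
      · exact haW
      · exact hx.elim
    · intro x hx
      rcases hx with (rfl | hx) | hx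
      · exact ⟨ha12, haY⟩
      · exact hx.elim
      · exact ⟨fun hc => hbW (hc ▸ hx), fun hc => hWY hx hc⟩
  rw [hinv, mul_assoc, inv_mul_cancel, mul_one]

theorem stmt10 (m n : ℕ) (hm : 4 ≤ m) (heven : Even m) (hmn : m ≤ n)
    (a₁ a₂ : ℕ) (ha₁ : 1 ≤ a₁) (ha₁n : a₁ ≤ n) (ha₂ : 1 ≤ a₂) (ha₂n : a₂ ≤ n)
    (w y z : ℕ → ℕ)
    (hout : ∀ i, 1 ≤ i → i ≤ m / 2 - 1 → n < w i ∧ n < y i ∧ n < z i)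
    (hnd : (a₁ :: a₂ ::
        ((List.range (m / 2 - 1)).map (fun i => w (i + 1)) ++
         (List.range (m / 2 - 1)).map (fun i => y (i + 1)) ++
         (List.range (m / 2 - 1)).map (fun i => z (i + 1)))).Nodup) :
    (Equiv.swap a₁ a₂)⁻¹ =
      (a₁ :: ((List.range (m / 2 - 1)).map (fun i => z (m / 2 - 1 - i)) ++
          (List.range (m / 2 - 1)).map (fun i => y (m / 2 - 1 - i)) ++ [a₂])).formPerm *
      (a₁ :: ((List.range (m / 2 - 1)).map (fun i => w (m / 2 - 1 - i)) ++ [a₂] ++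
          (List.range (m / 2 - 1)).map (fun i => z (i + 1)))).formPerm *
      ((List.range (m / 2 - 1)).map (fun i => w (i + 1)) ++ [a₁] ++
          (List.range (m / 2 - 1)).map (fun i => y (i + 1)) ++ [a₂]).formPerm ∧
    (a₁ :: ((List.range (m / 2 - 1)).map (fun i => z (m / 2 - 1 - i)) ++
        (List.range (m / 2 - 1)).map (fun i => y (m / 2 - 1 - i)) ++ [a₂])).toFinset ≠
      (a₁ :: ((List.range (m / 2 - 1)).map (fun i => w (m / 2 - 1 - i)) ++ [a₂] ++
        (List.range (m / 2 - 1)).map (fun i => z (i + 1)))).toFinset ∧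
    (a₁ :: ((List.range (m / 2 - 1)).map (fun i => z (m / 2 - 1 - i)) ++
        (List.range (m / 2 - 1)).map (fun i => y (m / 2 - 1 - i)) ++ [a₂])).toFinset ≠
      ((List.range (m / 2 - 1)).map (fun i => w (i + 1)) ++ [a₁] ++
        (List.range (m / 2 - 1)).map (fun i => y (i + 1)) ++ [a₂]).toFinset ∧
    (a₁ :: ((List.range (m / 2 - 1)).map (fun i => w (m / 2 - 1 - i)) ++ [a₂] ++
        (List.range (m / 2 - 1)).map (fun i => z (i + 1)))).toFinset ≠
      ((List.range (m / 2 - 1)).map (fun i => w (i + 1)) ++ [a₁] ++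
        (List.range (m / 2 - 1)).map (fun i => y (i + 1)) ++ [a₂]).toFinset := by
  set k := m / 2 - 1 with hk
  have hk1 : 1 ≤ k := by
    have : 2 ≤ m / 2 := by omega
    omega
  have hrev : ∀ f : ℕ → ℕ,
      ((List.range k).map fun i => f (i + 1)).reverse =
        (List.range k).map (fun i => f (k - i)) := by
    intro f
    have hr : (List.range k).reverse = (List.range k).map (fun i => k - 1 - i) := by
      rw [List.range_eq_range', List.reverse_range']
      simp [← List.range_eq_range']
    rw [← List.map_reverse, hr, List.map_map]
    apply List.map_congr_left
    intro i hi
    rw [List.mem_range] at hi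
    simp only [Function.comp_apply]
    congr 1
    omega
  rw [← hrev w, ← hrev y, ← hrev z]
  set W := (List.range k).map (fun i => w (i + 1)) with hW
  set Y := (List.range k).map (fun i => y (i + 1)) with hY
  set Z := (List.range k).map (fun i => z (i + 1)) with hZ
  -- basic distinctness facts from hnd
  have hnd' := hnd
  simp only [List.nodup_cons, List.nodup_append', List.mem_append, List.mem_cons,
    List.disjoint_left, not_or] at hnd'
  obtain ⟨⟨ha12, ⟨haW, haY⟩, haZ⟩, ⟨⟨hbW, hbY⟩, hbZ⟩, ⟨hnW, hnY, hWY⟩, hnZ, hWYZ⟩ := hnd'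
  have hy1Y : y 1 ∈ Y := by
    rw [hY, List.mem_map]
    exact ⟨0, by simp; omega, rfl⟩
  have hz1Z : z 1 ∈ Z := by
    rw [hZ, List.mem_map]
    exact ⟨0, by simp; omega, rfl⟩
  refine ⟨?_, ?_, ?_, ?_⟩
  · rw [Equiv.swap_inv]
    exact three_cycles a₁ a₂ W Y Z hnd
  · -- first ≠ second : y 1 distinguishes
    intro heq
    have h1 : y 1 ∉ W := fun hc => hWY hc hy1Y
    have h2 : y 1 ∉ Z := hWYZ (Or.inr hy1Y)
    have h3 : y 1 ≠ a₁ := fun hc => haY (hc ▸ hy1Y)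
    have h4 : y 1 ≠ a₂ := fun hc => hbY (hc ▸ hy1Y)
    have hmem : y 1 ∈ (a₁ :: (Z.reverse ++ Y.reverse ++ [a₂])).toFinset := by
      simp only [List.mem_toFinset, List.mem_cons, List.mem_append, List.mem_reverse,
        List.mem_singleton]
      tauto
    rw [heq] at hmem
    simp only [List.mem_toFinset, List.mem_cons, List.mem_append, List.mem_reverse,
      List.mem_singleton] at hmem
    tauto
  · -- first ≠ third : z 1 distinguishes
    intro heq
    have h1 : z 1 ∉ W := fun hc => hWYZ (Or.inl hc) hz1Z
    have h2 : z 1 ∉ Y := fun hc => hWYZ (Or.inr hc) hz1Z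
    have h3 : z 1 ≠ a₁ := fun hc => haZ (hc ▸ hz1Z)
    have h4 : z 1 ≠ a₂ := fun hc => hbZ (hc ▸ hz1Z)
    have hmem : z 1 ∈ (a₁ :: (Z.reverse ++ Y.reverse ++ [a₂])).toFinset := by
      simp only [List.mem_toFinset, List.mem_cons, List.mem_append, List.mem_reverse,
        List.mem_singleton]
      tauto
    rw [heq] at hmem
    simp only [List.mem_toFinset, List.mem_cons, List.mem_append, List.mem_reverse,
      List.mem_singleton] at hmem
    tauto
  · -- second ≠ third : z 1 distinguishes
    intro heq
    have h1 : z 1 ∉ W := fun hc => hWYZ (Or.inl hc) hz1Z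
    have h2 : z 1 ∉ Y := fun hc => hWYZ (Or.inr hc) hz1Z
    have h3 : z 1 ≠ a₁ := fun hc => haZ (hc ▸ hz1Z)
    have h4 : z 1 ≠ a₂ := fun hc => hbZ (hc ▸ hz1Z)
    have hmem : z 1 ∈ (a₁ :: (W.reverse ++ [a₂] ++ Z)).toFinset := by
      simp only [List.mem_toFinset, List.mem_cons, List.mem_append, List.mem_reverse,
        List.mem_singleton]
      tauto
    rw [heq] at hmem
    simp only [List.mem_toFinset, List.mem_cons, List.mem_append, List.mem_reverse,
      List.mem_singleton] at hmem
    tauto
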